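/- arXiv:1212.6617 — 2 statements merged into one kernel-verified Lean document; each statement's English description precedes it below -/
import Mathlib

section
/- Let C > 0 and U_α = {v ∈ Q̂ : B(α,v) > C}. Setting T = min over α ∈ Δ of 1/(1 − 2C|α|₁), for any x ∈ U_α and y ∈ V_α one has |B(s_α · x, s_α · y)| > T·|B(x,y)|, where T > 1. -/
set_option maxHeartbeats 1000000


open Matrix

/-- The quadratic form of `B` is positive on nonzero vectors orthogonal (in the
Euclidean sense) to the negative eigenvector `o`. -/
lemma stmt8_posPerp (n : ℕ) (B : Matrix (Fin n) (Fin n) ℝ) (hB : B.IsHermitian)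
    (hneg : (Finset.univ.filter (fun i => hB.eigenvalues i < 0)).card = 1)
    (hpos : (Finset.univ.filter (fun i => 0 < hB.eigenvalues i)).card = n - 1)
    (o : Fin n → ℝ) (μ : ℝ) (hμ : μ < 0) (ho : B.mulVec o = μ • o)
    (honorm : o ⬝ᵥ o = 1)
    (v : Fin n → ℝ) (hvo : v ⬝ᵥ o = 0) (hv : v ≠ 0) :
    0 < v ⬝ᵥ B.mulVec v := by
  classical
  have hBt : Bᵀ = B := by simpa using hB.eq
  have h2 : ∀ u : Fin n → ℝ, u ᵥ* B = B *ᵥ u := fun u => by rw [← mulVec_transpose, hBt]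
  have hsym : ∀ u w : Fin n → ℝ, u ⬝ᵥ B.mulVec w = w ⬝ᵥ B.mulVec u := by
    intro u w
    rw [dotProduct_mulVec, h2, dotProduct_comm]
  obtain ⟨k, hk⟩ := Finset.card_eq_one.mp hneg
  have hkneg : hB.eigenvalues k < 0 := by
    have : k ∈ Finset.univ.filter (fun i => hB.eigenvalues i < 0) := by
      rw [hk]; exact Finset.mem_singleton_self k
    exact (Finset.mem_filter.mp this).2
  have hjpos : ∀ j, j ≠ k → 0 < hB.eigenvalues j := by
    intro j hj
    by_contra hle
    push_neg at hle
    have hdisj : Disjoint (Finset.univ.filter (fun i => hB.eigenvalues i < 0))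
        (Finset.univ.filter (fun i => 0 < hB.eigenvalues i)) := by
      rw [Finset.disjoint_filter]
      intro a _ h1; exact lt_asymm h1
    have hsub : (Finset.univ.filter (fun i => hB.eigenvalues i < 0)) ∪
        (Finset.univ.filter (fun i => 0 < hB.eigenvalues i)) ⊆ Finset.univ.erase j := by
      intro a ha
      refine Finset.mem_erase.mpr ⟨?_, Finset.mem_univ a⟩
      rintro rfl
      rcases Finset.mem_union.mp ha with h | h
      · exact hj (Finset.mem_singleton.mp (hk ▸ h))
      · exact absurd (Finset.mem_filter.mp h).2 (not_lt.mpr hle)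
    have hcard := Finset.card_le_card hsub
    have hn1 : 1 ≤ n := k.pos
    rw [Finset.card_union_of_disjoint hdisj, hneg, hpos,
      Finset.card_erase_of_mem (Finset.mem_univ j), Finset.card_univ, Fintype.card_fin] at hcard
    omega
  set f := hB.eigenvectorBasis with hf
  have hdi : ∀ u w : Fin n → ℝ, u ⬝ᵥ w
      = (inner ℝ (WithLp.toLp 2 u : EuclideanSpace ℝ (Fin n)) (WithLp.toLp 2 w)) := by
    intro u w; simp [PiLp.inner_apply, dotProduct, mul_comm]
  have hinner : ∀ x y : EuclideanSpace ℝ (Fin n),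
      (inner ℝ x y : ℝ) = ∑ j, f.repr x j * f.repr y j := by
    intro x y
    rw [← f.repr.inner_map_map x y, PiLp.inner_apply]
    simp [RCLike.inner_apply, mul_comm]
  set v' : EuclideanSpace ℝ (Fin n) := WithLp.toLp 2 v with hv'
  set o' : EuclideanSpace ℝ (Fin n) := WithLp.toLp 2 o with ho'
  have hBf : ∀ j, B.mulVec (f j : Fin n → ℝ) = hB.eigenvalues j • (f j : Fin n → ℝ) :=
    fun j => hB.mulVec_eigenvectorBasis j
  have hfo : ∀ j, j ≠ k → (f j : Fin n → ℝ) ⬝ᵥ o = 0 := by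
    intro j hj
    have e1 : (f j : Fin n → ℝ) ⬝ᵥ B.mulVec o = μ * ((f j : Fin n → ℝ) ⬝ᵥ o) := by
      rw [ho, dotProduct_smul]; rfl
    have e2 : (f j : Fin n → ℝ) ⬝ᵥ B.mulVec o
        = hB.eigenvalues j * ((f j : Fin n → ℝ) ⬝ᵥ o) := by
      rw [hsym, hBf, dotProduct_smul, dotProduct_comm]; rfl
    have hne : μ ≠ hB.eigenvalues j := ne_of_lt (lt_of_lt_of_le hμ (le_of_lt (hjpos j hj)))
    have := e1.symm.trans e2
    rcases mul_eq_mul_right_iff.mp this with h | h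
    · exact absurd h hne
    · exact h
  have hrepro : ∀ j, j ≠ k → f.repr o' j = 0 := by
    intro j hj
    rw [f.repr_apply_apply, ← WithLp.toLp_ofLp (x := f j), ← hdi]
    exact hfo j hj
  have hok : f.repr o' k ≠ 0 := by
    intro h0
    have : (1:ℝ) = 0 := by
      have h1 : o ⬝ᵥ o = ∑ j, f.repr o' j * f.repr o' j := by
        rw [hdi]; exact hinner o' o'
      rw [honorm] at h1
      rw [h1, Finset.sum_eq_zero]
      intro j _
      by_cases hj : j = k
      · subst hj; rw [h0]; ring
      · rw [hrepro j hj]; ring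
    norm_num at this
  have hvk : f.repr v' k = 0 := by
    have h1 : v ⬝ᵥ o = ∑ j, f.repr v' j * f.repr o' j := by rw [hdi]; exact hinner v' o'
    rw [hvo] at h1
    have h2 : ∑ j, f.repr v' j * f.repr o' j = f.repr v' k * f.repr o' k := by
      rw [Finset.sum_eq_single k]
      · intro j _ hj; rw [hrepro j hj]; ring
      · intro h; exact absurd (Finset.mem_univ k) h
    rw [h2] at h1
    rcases mul_eq_zero.mp h1.symm with h | h
    · exact h
    · exact absurd h hok
  have hreprBv : ∀ j, f.repr (show EuclideanSpace ℝ (Fin n) from WithLp.toLp 2 (B.mulVec v)) j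
      = hB.eigenvalues j * f.repr v' j := by
    intro j
    rw [f.repr_apply_apply, ← WithLp.toLp_ofLp (x := f j), ← hdi]
    calc (f j : Fin n → ℝ) ⬝ᵥ B.mulVec v = v ⬝ᵥ B.mulVec (f j) := hsym _ _
    _ = hB.eigenvalues j * (v ⬝ᵥ (f j : Fin n → ℝ)) := by
        rw [hBf, dotProduct_smul]; rfl
    _ = hB.eigenvalues j * f.repr v' j := by
        rw [dotProduct_comm, hdi, WithLp.toLp_ofLp, ← f.repr_apply_apply]
  have hq : v ⬝ᵥ B.mulVec v = ∑ j, hB.eigenvalues j * (f.repr v' j)^2 := by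
    rw [hdi]
    rw [hinner v' (show EuclideanSpace ℝ (Fin n) from WithLp.toLp 2 (B.mulVec v))]
    refine Finset.sum_congr rfl fun j _ => ?_
    rw [hreprBv j]; ring
  rw [hq]
  have hvne : f.repr v' ≠ 0 := by
    intro h
    apply hv
    have : v' = 0 := by
      apply f.repr.injective
      rw [h, map_zero]
    exact congrArg WithLp.ofLp this
  obtain ⟨j0, hj0⟩ := Function.ne_iff.mp (fun h => hvne (WithLp.ofLp_injective 2 h))
  have hj0k : j0 ≠ k := by
    intro h; subst h; exact hj0 hvk
  apply Finset.sum_pos'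
  · intro j _
    by_cases hj : j = k
    · subst hj; rw [hvk]; simp
    · exact mul_nonneg (hjpos j hj).le (sq_nonneg _)
  · exact ⟨j0, Finset.mem_univ j0, mul_pos (hjpos j0 hj0k) (sq_pos_of_ne_zero hj0)⟩

lemma stmt8_aux (Cv ov : ℝ) (hC : 0 < Cv) (ho : 0 < ov) (h : Cv < 1 / (2 * ov)) :
    0 < 1 - 2 * Cv * ov ∧ 1 - 2 * Cv * ov < 1 := by
  have h1 : Cv * (2 * ov) < 1 := (lt_div_iff₀ (by positivity)).mp h
  constructor <;> nlinarith

/-- With `T = min_α 1/(1 - 2C|α|₁) > 1`, for `x ∈ U_α = {v ∈ Q̂ : B(α,v) > C}`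
and `y ∈ V_α = {v ∈ Q̂ : B(α,v) ≥ 0}` one has `|B(s_α·x, s_α·y)| > T·|B(x,y)|`. -/
theorem stmt8 (n : ℕ) (B : Matrix (Fin n) (Fin n) ℝ) (hB : B.IsHermitian)
    (hdiag : ∀ i, B i i = 1)
    (hoff : ∀ i j, i ≠ j → B i j ≤ 0)
    (hneg : (Finset.univ.filter (fun i => hB.eigenvalues i < 0)).card = 1)
    (hpos : (Finset.univ.filter (fun i => 0 < hB.eigenvalues i)).card = n - 1)
    (o : Fin n → ℝ) (μ : ℝ) (hμ : μ < 0) (ho : B.mulVec o = μ • o)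
    (honorm : o ⬝ᵥ o = 1) (hopos : ∀ i, 0 < o i)
    (C : ℝ) (hC : 0 < C) (hC2 : ∀ j, C < 1 / (2 * o j))
    (i : Fin n) (x y : Fin n → ℝ)
    (hxQ : x ⬝ᵥ B.mulVec x = 0) (hx1 : x ⬝ᵥ o = 1)
    (hyQ : y ⬝ᵥ B.mulVec y = 0) (hy1 : y ⬝ᵥ o = 1)
    (hxy : x ≠ y)
    (hx : C < B.mulVec x i) (hy : 0 ≤ B.mulVec y i) :
    let T := Finset.univ.inf' ⟨i, Finset.mem_univ i⟩ (fun j => (1 - 2 * C * o j)⁻¹)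
    let sx := x - (2 * B.mulVec x i) • (Pi.single i (1:ℝ) : Fin n → ℝ)
    let sy := y - (2 * B.mulVec y i) • (Pi.single i (1:ℝ) : Fin n → ℝ)
    let nx := (sx ⬝ᵥ o)⁻¹ • sx
    let ny := (sy ⬝ᵥ o)⁻¹ • sy
    1 < T ∧ T * |x ⬝ᵥ B.mulVec y| < |nx ⬝ᵥ B.mulVec ny| := by
  classical
  intro T sx sy nx ny
  set e : Fin n → ℝ := Pi.single i (1:ℝ) with he
  have hBt : Bᵀ = B := by simpa using hB.eq
  have hsym : ∀ u w : Fin n → ℝ, u ⬝ᵥ B.mulVec w = w ⬝ᵥ B.mulVec u := by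
    intro u w
    rw [dotProduct_mulVec, show u ᵥ* B = B *ᵥ u from by rw [← mulVec_transpose, hBt],
      dotProduct_comm]
  have heo : e ⬝ᵥ o = o i := by rw [he, single_dotProduct, one_mul]
  have heB : ∀ w : Fin n → ℝ, e ⬝ᵥ B.mulVec w = B.mulVec w i := by
    intro w; rw [he, single_dotProduct, one_mul]
  have hBe : ∀ w : Fin n → ℝ, w ⬝ᵥ B.mulVec e = B.mulVec w i := by
    intro w; rw [hsym, heB]
  have heBe : e ⬝ᵥ B.mulVec e = 1 := by
    rw [heB, he, mulVec_single]; simp [hdiag]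
  have hexp : ∀ (u w : Fin n → ℝ) (c d : ℝ),
      (u - c • e) ⬝ᵥ B.mulVec (w - d • e)
        = u ⬝ᵥ B.mulVec w - d * B.mulVec u i - c * B.mulVec w i + c * d := by
    intro u w c d
    rw [sub_dotProduct, mulVec_sub, mulVec_smul, dotProduct_sub, dotProduct_sub,
      dotProduct_smul, dotProduct_smul, smul_dotProduct, smul_dotProduct,
      smul_eq_mul, smul_eq_mul, smul_eq_mul, smul_eq_mul, hBe u, heB w, heBe]
    ring
  -- cross negativity
  have hcross : ∀ p q : Fin n → ℝ, p ⬝ᵥ B.mulVec p = 0 → q ⬝ᵥ B.mulVec q = 0 →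
      p ⬝ᵥ o = 1 → q ⬝ᵥ o = 1 → p ≠ q → p ⬝ᵥ B.mulVec q < 0 := by
    intro p q hp hq hp1 hq1 hpq
    have h0 : (p - q) ⬝ᵥ o = 0 := by rw [sub_dotProduct, hp1, hq1]; ring
    have hne : p - q ≠ 0 := sub_ne_zero.mpr hpq
    have hqpos := stmt8_posPerp n B hB hneg hpos o μ hμ ho honorm (p - q) h0 hne
    have hex : (p - q) ⬝ᵥ B.mulVec (p - q) = -(2 * (p ⬝ᵥ B.mulVec q)) := by
      rw [sub_dotProduct, mulVec_sub, dotProduct_sub, dotProduct_sub, hp, hq,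
        hsym q p]
      ring
    rw [hex] at hqpos
    linarith
  set a := B.mulVec x i with ha
  set b := B.mulVec y i with hb
  have hoi : 0 < o i := hopos i
  have hapos : 0 < a := lt_trans hC hx
  -- the normalization factors
  have hsxo : sx ⬝ᵥ o = 1 - 2 * a * o i := by
    rw [show sx = x - (2*a) • e from rfl, sub_dotProduct, smul_dotProduct, heo, hx1,
      smul_eq_mul]
    try ring
  have hsyo : sy ⬝ᵥ o = 1 - 2 * b * o i := by
    rw [show sy = y - (2*b) • e from rfl, sub_dotProduct, smul_dotProduct, heo, hy1,
      smul_eq_mul]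
    try ring
  -- reflections are isotropic and preserve the form
  have hsxQ : sx ⬝ᵥ B.mulVec sx = 0 := by
    rw [show sx = x - (2*a) • e from rfl, hexp, hxQ, ← ha]; try ring
  have hsyQ : sy ⬝ᵥ B.mulVec sy = 0 := by
    rw [show sy = y - (2*b) • e from rfl, hexp, hyQ, ← hb]; try ring
  have hsxBsy : sx ⬝ᵥ B.mulVec sy = x ⬝ᵥ B.mulVec y := by
    rw [show sx = x - (2*a) • e from rfl, show sy = y - (2*b) • e from rfl, hexp,
      ← ha, ← hb]
    try ring
  -- generic positivity of the normalization factor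
  have key : ∀ (z : Fin n → ℝ) (c : ℝ), z ⬝ᵥ B.mulVec z = 0 → z ⬝ᵥ o = 1 →
      B.mulVec z i = c → 0 ≤ c → 0 < 1 - 2 * c * o i := by
    intro z c hzQ hz1 hzc hc0
    rcases eq_or_lt_of_le hc0 with hc | hc
    · rw [← hc]; norm_num
    · set sz : Fin n → ℝ := z - (2*c) • e with hsz
      have hszo : sz ⬝ᵥ o = 1 - 2 * c * o i := by
        rw [hsz, sub_dotProduct, smul_dotProduct, heo, hz1, smul_eq_mul]; try ring
      have hszQ : sz ⬝ᵥ B.mulVec sz = 0 := by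
        rw [hsz, hexp, hzQ, hzc]; try ring
      have hzBsz : z ⬝ᵥ B.mulVec sz = -(2*c^2) := by
        have : z ⬝ᵥ B.mulVec sz = (z - (0:ℝ) • e) ⬝ᵥ B.mulVec sz := by
          rw [zero_smul, sub_zero]
        rw [this, hsz, hexp, hzQ, hzc]; try ring
      set s : ℝ := 1 - 2 * c * o i with hs
      have hsne : s ≠ 0 := by
        intro h0
        have hszo0 : sz ⬝ᵥ o = 0 := hszo.trans h0
        have hszne : sz ≠ 0 := by
          intro h
          rw [h] at hzBsz
          simp only [mulVec_zero, dotProduct_zero] at hzBsz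
          nlinarith
        have := stmt8_posPerp n B hB hneg hpos o μ hμ ho honorm sz hszo0 hszne
        rw [hszQ] at this
        exact lt_irrefl 0 this
      rcases hsne.lt_or_gt with hslt | hsgt
      · exfalso
        set p : Fin n → ℝ := s⁻¹ • sz with hp
        have hp1 : p ⬝ᵥ o = 1 := by
          rw [hp, smul_dotProduct, hszo, smul_eq_mul, inv_mul_cancel₀ hsne]
        have hpQ : p ⬝ᵥ B.mulVec p = 0 := by
          rw [hp, smul_dotProduct, mulVec_smul, dotProduct_smul, hszQ]
          simp
        have hzBp : z ⬝ᵥ B.mulVec p = s⁻¹ * -(2*c^2) := by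
          rw [hp, mulVec_smul, dotProduct_smul, hzBsz, smul_eq_mul]
        have hpos' : 0 < z ⬝ᵥ B.mulVec p := by
          rw [hzBp]
          have h1 : s⁻¹ < 0 := inv_lt_zero.mpr hslt
          have h2 : -(2*c^2) < 0 := by nlinarith
          exact mul_pos_of_neg_of_neg h1 h2
        have hle : z ⬝ᵥ B.mulVec p ≤ 0 := by
          by_cases hzp : z = p
          · rw [← hzp, hzQ]
          · exact le_of_lt (hcross z p hzQ hpQ hz1 hp1 hzp)
        linarith
      · exact hsgt
  have hsX : 0 < 1 - 2 * a * o i := key x a hxQ hx1 rfl hapos.le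
  have hsY : 0 < 1 - 2 * b * o i := key y b hyQ hy1 rfl hy
  -- x B y < 0
  have hxBy : x ⬝ᵥ B.mulVec y < 0 := hcross x y hxQ hyQ hx1 hy1 hxy
  have habs : 0 < |x ⬝ᵥ B.mulVec y| := abs_pos.mpr (ne_of_lt hxBy)
  -- T facts
  have hTub : ∀ j : Fin n, 0 < 1 - 2 * C * o j ∧ 1 - 2 * C * o j < 1 :=
    fun j => stmt8_aux C (o j) hC (hopos j) (hC2 j)
  have hT1 : 1 < T := by
    refine (Finset.lt_inf'_iff (H := ⟨i, Finset.mem_univ i⟩)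
      (f := fun j => (1 - 2 * C * o j)⁻¹)).mpr ?_
    intro j _
    exact one_lt_inv_iff₀.mpr ⟨(hTub j).1, (hTub j).2⟩
  have hTle : T ≤ (1 - 2 * C * o i)⁻¹ :=
    Finset.inf'_le _ (Finset.mem_univ i)
  refine ⟨hT1, ?_⟩
  -- compute the final quantity
  have hval : nx ⬝ᵥ B.mulVec ny
      = (1 - 2*a*o i)⁻¹ * ((1 - 2*b*o i)⁻¹ * (x ⬝ᵥ B.mulVec y)) := by
    rw [show nx = (sx ⬝ᵥ o)⁻¹ • sx from rfl, show ny = (sy ⬝ᵥ o)⁻¹ • sy from rfl,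
      smul_dotProduct, mulVec_smul, dotProduct_smul, smul_eq_mul, smul_eq_mul,
      hsxBsy, hsxo, hsyo]
  rw [hval]
  rw [abs_mul, abs_mul, abs_of_pos (inv_pos.mpr hsX), abs_of_pos (inv_pos.mpr hsY)]
  have hlt1 : T < (1 - 2*a*o i)⁻¹ * (1 - 2*b*o i)⁻¹ := by
    have hax : 1 - 2*a*o i < 1 - 2*C*o i := by
      nlinarith [mul_pos (sub_pos.mpr hx) hoi]
    have hstep1 : (1 - 2 * C * o i)⁻¹ < (1 - 2*a*o i)⁻¹ :=
      inv_strictAnti₀ hsX hax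
    have hby : 1 - 2*b*o i ≤ 1 := by nlinarith [mul_nonneg hy hoi.le]
    have hstep2 : 1 ≤ (1 - 2*b*o i)⁻¹ := one_le_inv_iff₀.mpr ⟨hsY, hby⟩
    calc T ≤ (1 - 2 * C * o i)⁻¹ := hTle
      _ < (1 - 2*a*o i)⁻¹ := hstep1
      _ ≤ (1 - 2*a*o i)⁻¹ * (1 - 2*b*o i)⁻¹ :=
          le_mul_of_one_le_right (inv_pos.mpr hsX).le hstep2
  calc T * |x ⬝ᵥ B.mulVec y|
      < ((1 - 2*a*o i)⁻¹ * (1 - 2*b*o i)⁻¹) * |x ⬝ᵥ B.mulVec y| := by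
        exact mul_lt_mul_of_pos_right hlt1 habs
    _ = (1 - 2*a*o i)⁻¹ * ((1 - 2*b*o i)⁻¹ * |x ⬝ᵥ B.mulVec y|) := by ring
end

section
/- Let (W,S) be an irreducible Coxeter system with connected Coxeter graph, and let K ⊆ Q̂ be a nonempty W-invariant subset under the normalized action. Then for every simple root α ∈ Δ there exists x_α ∈ K with s_α · x_α ≠ x_α (equivalently, B(x_α, α) ≠ 0). -/
open Matrix

lemma symdot {n : ℕ} {B : Matrix (Fin n) (Fin n) ℝ} (hB : B.IsHermitian) (x y : Fin n → ℝ) :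
    B.mulVec x ⬝ᵥ y = x ⬝ᵥ B.mulVec y := by
  have hBT : Bᵀ = B := by
    have := hB.eq
    rwa [Matrix.conjTranspose_eq_transpose_of_trivial] at this
  rw [Matrix.dotProduct_mulVec, ← Matrix.mulVec_transpose, hBT, dotProduct_comm]

lemma keyzero {n : ℕ} (B : Matrix (Fin n) (Fin n) ℝ) (hB : B.IsHermitian)
    (hneg : (Finset.univ.filter (fun i => hB.eigenvalues i < 0)).card = 1)
    (hpos : (Finset.univ.filter (fun i => 0 < hB.eigenvalues i)).card = n - 1)
    (hn : 0 < n)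
    (o : Fin n → ℝ) (μ : ℝ) (hμ : μ < 0) (ho : B.mulVec o = μ • o)
    (honorm : o ⬝ᵥ o = 1)
    (z : Fin n → ℝ) (hz0 : z ⬝ᵥ B.mulVec z = 0) (hzo : z ⬝ᵥ o = 0) : z = 0 := by
  classical
  set lam := hB.eigenvalues with hlam
  obtain ⟨k₀, hk₀⟩ := Finset.card_eq_one.mp hneg
  have hk₀mem : k₀ ∈ Finset.univ.filter (fun i => lam i < 0) := by rw [hk₀]; exact Finset.mem_singleton_self k₀
  have hlamk₀ : lam k₀ < 0 := (Finset.mem_filter.mp hk₀mem).2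
  -- every other eigenvalue is positive
  have hlampos : ∀ k, k ≠ k₀ → 0 < lam k := by
    intro k hk
    by_contra hle
    push_neg at hle
    have hknotneg : k ∉ Finset.univ.filter (fun i => lam i < 0) := by
      rw [hk₀]; simpa using hk
    have hknotpos : k ∉ Finset.univ.filter (fun i => 0 < lam i) := by
      simp only [Finset.mem_filter, Finset.mem_univ, true_and]
      exact not_lt.mpr hle
    have hdisj : Disjoint (Finset.univ.filter (fun i => lam i < 0))
        (Finset.univ.filter (fun i => 0 < lam i)) := by
      rw [Finset.disjoint_left]
      intro a ha hb
      exact absurd (Finset.mem_filter.mp hb).2 (not_lt.mpr (le_of_lt (Finset.mem_filter.mp ha).2))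
    have hcard : ((Finset.univ.filter (fun i => lam i < 0)) ∪
        (Finset.univ.filter (fun i => 0 < lam i))).card = n := by
      rw [Finset.card_union_of_disjoint hdisj, hneg, hpos]
      omega
    have huniv : (Finset.univ.filter (fun i => lam i < 0)) ∪
        (Finset.univ.filter (fun i => 0 < lam i)) = Finset.univ :=
      Finset.eq_univ_of_card _ (by rw [hcard]; simp)
    have : k ∈ (Finset.univ.filter (fun i => lam i < 0)) ∪
        (Finset.univ.filter (fun i => 0 < lam i)) := by rw [huniv]; exact Finset.mem_univ k
    rcases Finset.mem_union.mp this with h | h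
    · exact hknotneg h
    · exact hknotpos h
  set b := hB.eigenvectorBasis with hbdef
  set e := WithLp.equiv 2 (Fin n → ℝ) with hedef
  have hdot : ∀ x y : EuclideanSpace ℝ (Fin n), (inner ℝ x y : ℝ) = (e x) ⬝ᵥ (e y) := fun x y => by
    rw [EuclideanSpace.inner_eq_star_dotProduct]; simp [hedef, dotProduct_comm]
  -- eigen-equation in dotProduct form
  have heig : ∀ k (w : Fin n → ℝ), (e (b k)) ⬝ᵥ B.mulVec w = lam k * ((e (b k)) ⬝ᵥ w) := by
    intro k w
    rw [← symdot hB, show e (b k) = (b k).ofLp from rfl, hB.mulVec_eigenvectorBasis]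
    show (lam k • (e (b k))) ⬝ᵥ w = _
    rw [smul_dotProduct]
    simp
    exact Or.inl rfl
  -- coefficients of o
  have hdo : ∀ k, k ≠ k₀ → (e (b k)) ⬝ᵥ o = 0 := by
    intro k hk
    have h1 : (e (b k)) ⬝ᵥ B.mulVec o = lam k * ((e (b k)) ⬝ᵥ o) := heig k o
    rw [ho] at h1
    have h2 : (e (b k)) ⬝ᵥ (μ • o) = μ * ((e (b k)) ⬝ᵥ o) := by
      rw [dotProduct_smul]; simp
    rw [h2] at h1
    have : (μ - lam k) * ((e (b k)) ⬝ᵥ o) = 0 := by linarith [h1]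
    rcases mul_eq_zero.mp this with h | h
    · exact absurd h (by have := hlampos k hk; intro hc; nlinarith)
    · exact h
  -- Parseval for a pair of vectors
  have hpar : ∀ x y : Fin n → ℝ,
      x ⬝ᵥ y = ∑ k, (x ⬝ᵥ (e (b k))) * ((e (b k)) ⬝ᵥ y) := by
    intro x y
    have := b.sum_inner_mul_inner (e.symm x) (e.symm y)
    rw [hdot] at this
    simp only [hdot] at this
    simpa using this.symm
  -- coefficient functions
  set c : Fin n → ℝ := fun k => (e (b k)) ⬝ᵥ z with hc
  set d : Fin n → ℝ := fun k => (e (b k)) ⬝ᵥ o with hd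
  have hcomm : ∀ (x : Fin n → ℝ) k, x ⬝ᵥ (e (b k)) = (e (b k)) ⬝ᵥ x := fun x k =>
    dotProduct_comm _ _
  -- o ⬝ o = d k₀ ^2
  have hoo : o ⬝ᵥ o = d k₀ * d k₀ := by
    rw [hpar o o]
    rw [Finset.sum_eq_single k₀]
    · rw [hcomm]
    · intro k _ hk
      rw [hcomm]
      rw [hdo k hk]
      ring
    · simp
  have hdk₀ : d k₀ ≠ 0 := by
    intro h; rw [h] at hoo; rw [honorm] at hoo; norm_num at hoo
  -- z ⬝ o = c k₀ * d k₀
  have hzo' : z ⬝ᵥ o = c k₀ * d k₀ := by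
    rw [hpar z o]
    rw [Finset.sum_eq_single k₀]
    · rw [hcomm]
    · intro k _ hk
      rw [hdo k hk]; ring
    · simp
  have hck₀ : c k₀ = 0 := by
    rw [hzo'] at hzo
    rcases mul_eq_zero.mp hzo with h | h
    · exact h
    · exact absurd h hdk₀
  -- z ⬝ B z = ∑ lam k * c k ^ 2
  have hzBz : z ⬝ᵥ B.mulVec z = ∑ k, lam k * (c k * c k) := by
    rw [hpar z (B.mulVec z)]
    apply Finset.sum_congr rfl
    intro k _
    rw [heig k z, hcomm]
    ring
  have hallzero : ∀ k, lam k * (c k * c k) = 0 := by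
    have hnonneg : ∀ k ∈ Finset.univ, 0 ≤ lam k * (c k * c k) := by
      intro k _
      rcases eq_or_ne k k₀ with rfl | hk
      · rw [hck₀]; ring_nf; exact le_refl 0
      · exact mul_nonneg (le_of_lt (hlampos k hk)) (mul_self_nonneg _)
    have hsum : ∑ k, lam k * (c k * c k) = 0 := by rw [← hzBz]; exact hz0
    intro k
    exact (Finset.sum_eq_zero_iff_of_nonneg hnonneg).mp hsum k (Finset.mem_univ k)
  have hcall : ∀ k, c k = 0 := by
    intro k
    rcases eq_or_ne k k₀ with rfl | hk
    · exact hck₀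
    · have h := hallzero k
      have hl := hlampos k hk
      have : c k * c k = 0 := by
        rcases mul_eq_zero.mp h with h' | h'
        · exact absurd h' (ne_of_gt hl)
        · exact h'
      exact mul_self_eq_zero.mp this
  have hzz : z ⬝ᵥ z = 0 := by
    rw [hpar z z]
    apply Finset.sum_eq_zero
    intro k _
    rw [hcomm]
    have h1 : (e (b k)) ⬝ᵥ z = c k := rfl
    rw [h1, hcall k, mul_zero]
  exact dotProduct_self_eq_zero.mp hzz
/-- For an irreducible Coxeter system (connected Coxeter graph), any
nonempty subset `K ⊆ Q̂` invariant under every normalized simple reflection contains,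
for each simple root `αᵢ`, a point not fixed by `s_{αᵢ}` (i.e. with `B(x, αᵢ) ≠ 0`). -/
theorem stmt14 (n : ℕ) (B : Matrix (Fin n) (Fin n) ℝ) (hB : B.IsHermitian)
    (hdiag : ∀ i, B i i = 1)
    (hoff : ∀ i j, i ≠ j → B i j ≤ 0)
    (hconn : (SimpleGraph.fromRel (fun i j : Fin n => B i j ≠ 0)).Connected)
    (hneg : (Finset.univ.filter (fun i => hB.eigenvalues i < 0)).card = 1)
    (hpos : (Finset.univ.filter (fun i => 0 < hB.eigenvalues i)).card = n - 1)
    (o : Fin n → ℝ) (μ : ℝ) (hμ : μ < 0) (ho : B.mulVec o = μ • o)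
    (honorm : o ⬝ᵥ o = 1)
    (K : Set (Fin n → ℝ))
    (hKQ : ∀ x ∈ K, x ⬝ᵥ B.mulVec x = 0 ∧ x ⬝ᵥ o = 1)
    (hKne : K.Nonempty)
    (hKinv : ∀ (j : Fin n), ∀ x ∈ K,
      (((x - (2 * B.mulVec x j) • (Pi.single j (1:ℝ) : Fin n → ℝ)) ⬝ᵥ o)⁻¹ •
        (x - (2 * B.mulVec x j) • (Pi.single j (1:ℝ) : Fin n → ℝ))) ∈ K)
    (i : Fin n) :
    ∃ x ∈ K, B.mulVec x i ≠ 0 := by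
  classical
  have hn : 0 < n := i.pos
  have hBsym : ∀ a b : Fin n, B a b = B b a := by
    intro a b
    have hBT : Bᵀ = B := by
      have := hB.eq
      rwa [Matrix.conjTranspose_eq_transpose_of_trivial] at this
    calc B a b = Bᵀ b a := (Matrix.transpose_apply B b a).symm
    _ = B b a := congrFun (congrFun hBT b) a
  set P : Fin n → Prop := fun j => ∃ x ∈ K, B.mulVec x j ≠ 0 with hP
  -- base point
  obtain ⟨x₀, hx₀⟩ := hKne
  have hbase : ∃ j₀, P j₀ := by
    have hBx₀ : B.mulVec x₀ ≠ 0 := by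
      intro h
      have h1 : B.mulVec x₀ ⬝ᵥ o = x₀ ⬝ᵥ B.mulVec o := symdot hB x₀ o
      rw [h, ho, zero_dotProduct, dotProduct_smul] at h1
      rw [smul_eq_mul, (hKQ x₀ hx₀).2, mul_one] at h1
      exact absurd h1.symm (ne_of_lt hμ)
    obtain ⟨j₀, hj₀⟩ := Function.ne_iff.mp hBx₀
    exact ⟨j₀, x₀, hx₀, by simpa using hj₀⟩
  -- inductive step along edges of the Coxeter graph
  have hstep : ∀ j k : Fin n, B j k ≠ 0 → P j → P k := by
    intro j k hjk ⟨x, hxK, hxj⟩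
    by_cases hxk : B.mulVec x k ≠ 0
    · exact ⟨x, hxK, hxk⟩
    push_neg at hxk
    set t : ℝ := 2 * B.mulVec x j with ht
    set s : Fin n → ℝ := Pi.single j (1:ℝ) with hs
    set x' : Fin n → ℝ := x - t • s with hx'
    have hBs : B.mulVec s = fun m => B m j := by
      funext m
      rw [hs, Matrix.mulVec_single]
      simp
    have hBx' : B.mulVec x' = B.mulVec x - t • (fun m => B m j) := by
      rw [hx', Matrix.mulVec_sub, Matrix.mulVec_smul, hBs]
    have hsBw : ∀ w : Fin n → ℝ, s ⬝ᵥ B.mulVec w = B.mulVec w j := by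
      intro w
      rw [hs, single_dotProduct, one_mul]
    have hnull : x' ⬝ᵥ B.mulVec x' = 0 := by
      have hxBs : x ⬝ᵥ B.mulVec s = B.mulVec x j := by
        rw [← symdot hB, dotProduct_single, mul_one]
      have hsBs : s ⬝ᵥ B.mulVec s = 1 := by
        rw [hsBw, hBs]; exact hdiag j
      have h0 : x ⬝ᵥ B.mulVec x = 0 := (hKQ x hxK).1
      rw [hx', sub_dotProduct, smul_dotProduct,
        Matrix.mulVec_sub, Matrix.mulVec_smul,
        dotProduct_sub, dotProduct_sub,
        dotProduct_smul, dotProduct_smul,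
        h0, hxBs, hsBw x, hsBs]
      simp only [smul_eq_mul, ht]
      ring
    have hcne : x' ⬝ᵥ o ≠ 0 := by
      intro hc0
      have hx'0 : x' = 0 :=
        keyzero B hB hneg hpos hn o μ hμ ho honorm x' hnull hc0
      have hxeq : x = t • s := by
        rw [hx', sub_eq_zero] at hx'0
        exact hx'0
      have : B.mulVec x j = t := by
        rw [hxeq, Matrix.mulVec_smul, hBs]
        simp [hdiag j]
      rw [ht] at this
      exact hxj (by linarith)
    have hyK := hKinv j x hxK
    refine ⟨_, hyK, ?_⟩
    have hBy : B.mulVec (((x - (2 * B.mulVec x j) • (Pi.single j (1:ℝ) : Fin n → ℝ)) ⬝ᵥ o)⁻¹ •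
        (x - (2 * B.mulVec x j) • (Pi.single j (1:ℝ) : Fin n → ℝ))) k
        = (x' ⬝ᵥ o)⁻¹ * (B.mulVec x' k) := by
      rw [Matrix.mulVec_smul]
      rfl
    rw [hBy, hBx']
    have hxjne : t ≠ 0 := by
      rw [ht]; intro h; exact hxj (by linarith)
    have hBkj : B k j ≠ 0 := by rw [hBsym k j]; exact hjk
    simp only [Pi.sub_apply, Pi.smul_apply, smul_eq_mul, hxk, zero_sub]
    exact mul_ne_zero (inv_ne_zero hcne) (neg_ne_zero.mpr (mul_ne_zero hxjne hBkj))
  -- propagate along walks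
  set G := SimpleGraph.fromRel (fun i j : Fin n => B i j ≠ 0) with hG
  have hwalk : ∀ {j k : Fin n}, G.Walk j k → P j → P k := by
    intro j k w
    induction w with
    | nil => exact id
    | cons h _ ih =>
      intro hPj
      apply ih
      rw [hG, SimpleGraph.fromRel_adj] at h
      rcases h.2 with hr | hr
      · exact hstep _ _ hr hPj
      · exact hstep _ _ (by rwa [hBsym]) hPj
  obtain ⟨j₀, hj₀⟩ := hbase
  obtain ⟨w⟩ := hconn.preconnected j₀ i
  exact hwalk w hj₀
end
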